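/- If H is an S-quasinormal subgroup of a finite group G and U is a subgroup of G, then H ∩ U is S-quasinormal in U. -/

import Mathlib

open scoped Pointwise

/-- `H` is S-quasinormal in `G` if it permutes with every Sylow subgroup of `G`. -/
def SQuasinormal (G : Type*) [Group G] (H : Subgroup G) : Prop :=
  ∀ (p : ℕ), p.Prime → ∀ P : Sylow p G,
    (H : Set G) * ((P : Subgroup G) : Set G) = ((P : Subgroup G) : Set G) * (H : Set G)

namespace SQNAux

open Subgroup

variable {G : Type*} [Group G]

/-- `Q` is a maximal `p`-subgroup of `K` (a "Sylow `p`-subgroup of `K`", internal to `G`). -/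
def IsSyl (p : ℕ) (Q K : Subgroup G) : Prop :=
  Q ≤ K ∧ IsPGroup p Q ∧ ∀ R : Subgroup G, IsPGroup p R → Q ≤ R → R ≤ K → R = Q

/-- Internal notion of S-quasinormality relative to a subgroup `K`. -/
def SQN (H K : Subgroup G) : Prop :=
  H ≤ K ∧ ∀ p : ℕ, p.Prime → ∀ P : Subgroup G, IsSyl p P K →
    (H : Set G) * (P : Set G) = (P : Set G) * (H : Set G)

lemma card_subgroupOf_eq {A U : Subgroup G} (h : A ≤ U) :
    Nat.card (A.subgroupOf U) = Nat.card A := by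
  have e := (A.subgroupOf U).equivMapOfInjective U.subtype (subtype_injective U)
  rw [Nat.card_congr e.toEquiv, subgroupOf_map_subtype, inf_eq_left.mpr h]

lemma map_subgroupOf_eq {A U : Subgroup G} (h : A ≤ U) :
    (A.subgroupOf U).map U.subtype = A := by
  rw [subgroupOf_map_subtype, inf_eq_left.mpr h]

lemma isSyl_map {p : ℕ} (U : Subgroup G) (P : Sylow p ↥U) :
    IsSyl p ((P : Subgroup ↥U).map U.subtype) U := by
  refine ⟨map_subtype_le _, P.isPGroup'.map _, ?_⟩
  intro R hR hle hRU
  have hpg : IsPGroup p (R.subgroupOf U) := by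
    rw [← comap_subtype]; exact hR.comap_of_injective _ (subtype_injective U)
  have h1 : (P : Subgroup ↥U) ≤ R.subgroupOf U := by
    rw [← comap_subtype, ← map_le_iff_le_comap]; exact hle
  have h2 := P.is_maximal' hpg h1
  rw [← map_subgroupOf_eq hRU, h2]

lemma exists_isSyl_le {p : ℕ} {Q U : Subgroup G} (hQU : Q ≤ U) (hQ : IsPGroup p Q) :
    ∃ P : Subgroup G, IsSyl p P U ∧ Q ≤ P := by
  have hpg : IsPGroup p (Q.subgroupOf U) := by
    rw [← comap_subtype]; exact hQ.comap_of_injective _ (subtype_injective U)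
  obtain ⟨P, hP⟩ := hpg.exists_le_sylow
  refine ⟨(P : Subgroup ↥U).map U.subtype, isSyl_map U P, ?_⟩
  calc Q = (Q.subgroupOf U).map U.subtype := (map_subgroupOf_eq hQU).symm
    _ ≤ (P : Subgroup ↥U).map U.subtype := map_mono hP

lemma exists_isSyl_inf {p : ℕ} {R T K : Subgroup G} (hR : IsSyl p R T) (hTK : T ≤ K) :
    ∃ R₀ : Subgroup G, IsSyl p R₀ K ∧ R₀ ⊓ T = R := by
  obtain ⟨R₀, hR₀, hle⟩ := exists_isSyl_le (hR.1.trans hTK) hR.2.1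
  exact ⟨R₀, hR₀, hR.2.2 _ (hR₀.2.1.to_inf_left) (le_inf hle hR.1) inf_le_right⟩

variable [Finite G]

lemma IsSyl.card_eq {p : ℕ} [Fact p.Prime] {Q U : Subgroup G} (h : IsSyl p Q U) :
    Nat.card Q = p ^ (Nat.card U).factorization p := by
  have hpg : IsPGroup p (Q.subgroupOf U) := by
    rw [← comap_subtype]; exact h.2.1.comap_of_injective _ (subtype_injective U)
  let P : Sylow p ↥U :=
    { toSubgroup := Q.subgroupOf U
      isPGroup' := hpg
      is_maximal' := by
        intro R hR hle
        have h2 : R.map U.subtype = Q :=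
          h.2.2 _ (hR.map _) (by rw [← map_subgroupOf_eq h.1]; exact map_mono hle)
            (map_subtype_le _)
        rw [← comap_map_eq_self_of_injective (subtype_injective U) R, h2, comap_subtype]
    }
  have := Sylow.card_eq_multiplicity P
  rwa [show (P : Subgroup ↥U) = Q.subgroupOf U from rfl, card_subgroupOf_eq h.1] at this

lemma coe_sup_of_comm {A B : Subgroup G} (h : (A : Set G) * B = (B : Set G) * A) :
    ((A ⊔ B : Subgroup G) : Set G) = (A : Set G) * B := by
  let S : Subgroup G :=
    { carrier := (A : Set G) * B
      one_mem' := ⟨1, A.one_mem, 1, B.one_mem, one_mul 1⟩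
      mul_mem' := by
        rintro x y ⟨a1, ha1, b1, hb1, rfl⟩ ⟨a2, ha2, b2, hb2, rfl⟩
        have : b1 * a2 ∈ (A : Set G) * B := by
          rw [h]; exact ⟨b1, hb1, a2, ha2, rfl⟩
        obtain ⟨a', ha', b', hb', hab⟩ := this
        refine ⟨a1 * a', A.mul_mem ha1 ha', b' * b2, B.mul_mem hb' hb2, ?_⟩
        calc a1 * a' * (b' * b2) = a1 * (a' * b') * b2 := by group
          _ = a1 * (b1 * a2) * b2 := by rw [show a' * b' = b1 * a2 from hab]
          _ = a1 * b1 * (a2 * b2) := by group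
      inv_mem' := by
        rintro x ⟨a, ha, b, hb, rfl⟩
        have : b⁻¹ * a⁻¹ ∈ (A : Set G) * B := by
          rw [h]; exact ⟨b⁻¹, B.inv_mem hb, a⁻¹, A.inv_mem ha, rfl⟩
        simpa [mul_inv_rev] using this }
  have hS : A ⊔ B = S := by
    apply le_antisymm
    · refine sup_le (fun a ha => ⟨a, ha, 1, B.one_mem, mul_one a⟩)
        (fun b hb => ⟨1, A.one_mem, b, hb, one_mul b⟩)
    · rintro x ⟨a, ha, b, hb, rfl⟩
      exact mul_mem (le_sup_left (a := A) (b := B) ha) (le_sup_right (a := A) (b := B) hb)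
  rw [hS]; rfl

lemma card_mul_inf (A B : Subgroup G) :
    Nat.card ((A : Set G) * (B : Set G) : Set G) * Nat.card (A ⊓ B : Subgroup G) =
      Nat.card A * Nat.card B := by
  rw [Subgroup.card_mul_eq_card_subgroup_mul_card_quotient B (A : Set G)]
  have horb : ((A : Set G).image ((↑) : G → G ⧸ B)) =
      MulAction.orbit A ((1 : G) : G ⧸ B) := by
    ext x
    constructor
    · rintro ⟨a, ha, rfl⟩
      exact ⟨⟨a, ha⟩, by show ((a : G) • ((1 : G) : G ⧸ B)) = _; rw [MulAction.Quotient.smul_mk, smul_eq_mul, mul_one]⟩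
    · rintro ⟨⟨a, ha⟩, rfl⟩
      exact ⟨a, ha, by show _ = ((a : G) • ((1 : G) : G ⧸ B)); rw [MulAction.Quotient.smul_mk, smul_eq_mul, mul_one]⟩
  have hsmul_eq : ∀ a : A, a • ((1 : G) : G ⧸ B) = ((a : G) : G ⧸ B) := by
    intro a
    show ((a : G) • ((1 : G) : G ⧸ B)) = _
    rw [MulAction.Quotient.smul_mk, smul_eq_mul, mul_one]
  have hstab : MulAction.stabilizer A ((1 : G) : G ⧸ B) = B.subgroupOf A := by
    ext a
    simp only [MulAction.mem_stabilizer_iff, mem_subgroupOf, hsmul_eq]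
    rw [eq_comm, QuotientGroup.eq]
    simp
  have hcardorb : Nat.card (MulAction.orbit A ((1 : G) : G ⧸ B)) * Nat.card (A ⊓ B : Subgroup G)
      = Nat.card A := by
    rw [Nat.card_congr (MulAction.orbitEquivQuotientStabilizer A ((1 : G) : G ⧸ B)), hstab]
    have hc : Nat.card (B.subgroupOf A) = Nat.card (A ⊓ B : Subgroup G) := by
      have e := (B.subgroupOf A).equivMapOfInjective A.subtype (subtype_injective A)
      rw [Nat.card_congr e.toEquiv, subgroupOf_map_subtype, inf_comm]
    rw [← hc]
    exact (Subgroup.card_eq_card_quotient_mul_card_subgroup (B.subgroupOf A)).symm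
  rw [horb]
  calc Nat.card B * Nat.card (MulAction.orbit A ((1 : G) : G ⧸ B)) *
        Nat.card (A ⊓ B : Subgroup G)
      = Nat.card B * (Nat.card (MulAction.orbit A ((1 : G) : G ⧸ B)) *
        Nat.card (A ⊓ B : Subgroup G)) := by ring
    _ = Nat.card B * Nat.card A := by rw [hcardorb]
    _ = Nat.card A * Nat.card B := mul_comm _ _

lemma sqn_of_le {H T K : Subgroup G} (hSQN : SQN H K) (hHT : H ≤ T) (hTK : T ≤ K) :
    SQN H T := by
  refine ⟨hHT, fun p hp R hR => ?_⟩
  obtain ⟨R₀, hR₀, hinf⟩ := exists_isSyl_inf hR hTK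
  have h1 : (H : Set G) * R = ((H : Set G) * R₀) ∩ T := by
    rw [← hinf]; exact Subgroup.mul_inf_assoc H R₀ T hHT
  have h2 : (R : Set G) * H = ((R₀ : Set G) * H) ∩ T := by
    rw [← hinf, inf_comm (a := R₀), Subgroup.inf_mul_assoc T R₀ H hHT, Set.inter_comm]
  rw [h1, h2, hSQN.2 p hp R₀ hR₀]

lemma main (n : ℕ) : ∀ K H U : Subgroup G, Nat.card K ≤ n → SQN H K → U ≤ K →
    ∀ p : ℕ, p.Prime → ∀ Q : Subgroup G, IsSyl p Q U →
    ((H ⊓ U : Subgroup G) : Set G) * Q = (Q : Set G) * ((H ⊓ U : Subgroup G) : Set G) := by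
  induction n using Nat.strong_induction_on with
  | _ n ih =>
  intro K H U hn hSQN hUK p hp Q hQ
  haveI : Fact p.Prime := ⟨hp⟩
  obtain ⟨P, hP, hQP⟩ := exists_isSyl_le (hQ.1.trans hUK) hQ.2.1
  have hTK : H ⊔ P ≤ K := sup_le hSQN.1 hP.1
  rcases lt_or_eq_of_le (Subgroup.card_le_of_le hTK) with hcard | hcard
  · -- the case H ⊔ P < K : use the induction hypothesis inside H ⊔ P
    have h1 : SQN H (H ⊔ P) := sqn_of_le hSQN le_sup_left hTK
    have hQ' : IsSyl p Q (U ⊓ (H ⊔ P)) :=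
      ⟨le_inf hQ.1 (hQP.trans le_sup_right), hQ.2.1,
        fun R hR hle hRU => hQ.2.2 R hR hle (hRU.trans inf_le_left)⟩
    have h2 := ih (Nat.card (H ⊔ P : Subgroup G)) (lt_of_lt_of_le hcard hn)
      (H ⊔ P) H (U ⊓ (H ⊔ P)) le_rfl h1 inf_le_right p hp Q hQ'
    have h3 : H ⊓ (U ⊓ (H ⊔ P)) = H ⊓ U := by
      rw [← inf_assoc]
      exact inf_eq_left.mpr (inf_le_left.trans le_sup_left)
    rwa [h3] at h2
  · -- the case H ⊔ P = K
    have hHpos : 0 < Nat.card H := Nat.card_pos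
    have hKset : (K : Set G) = (H : Set G) * P := by
      rw [← Subgroup.eq_of_le_of_card_ge hTK (le_of_eq hcard.symm)]
      exact coe_sup_of_comm (hSQN.2 p hp P hP)
    have hcardK : Nat.card K * Nat.card (H ⊓ P : Subgroup G) = Nat.card H * Nat.card P := by
      have h4 := card_mul_inf H P
      rwa [← hKset, SetLike.coe_sort_coe] at h4
    obtain ⟨N, hN⟩ : Nat.card H ∣ Nat.card K := Subgroup.card_dvd_of_le hSQN.1
    obtain ⟨s, hs⟩ := IsPGroup.iff_card.mp hP.2.1
    have hNdvd : N ∣ p ^ s := by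
      have h5 : Nat.card H * (N * Nat.card (H ⊓ P : Subgroup G)) =
          Nat.card H * Nat.card P := by rw [← mul_assoc, ← hN, hcardK]
      have h6 := Nat.eq_of_mul_eq_mul_left hHpos h5
      exact ⟨_, by rw [← hs, ← h6]⟩
    -- every Sylow subgroup of K for a prime q ≠ p is contained in H
    have hSylH : ∀ q : ℕ, q.Prime → q ≠ p → ∀ R₀ : Subgroup G, IsSyl q R₀ K → R₀ ≤ H := by
      intro q hq hqp R₀ hR₀
      haveI : Fact q.Prime := ⟨hq⟩
      have hSset := coe_sup_of_comm (hSQN.2 q hq R₀ hR₀)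
      have hcardS : Nat.card (H ⊔ R₀ : Subgroup G) * Nat.card (H ⊓ R₀ : Subgroup G)
          = Nat.card H * Nat.card R₀ := by
        have h4 := card_mul_inf H R₀
        rwa [← hSset, SetLike.coe_sort_coe] at h4
      obtain ⟨m, hm⟩ := Subgroup.card_dvd_of_le (le_sup_left : H ≤ H ⊔ R₀)
      have h7 : Nat.card H * (m * Nat.card (H ⊓ R₀ : Subgroup G)) =
          Nat.card H * Nat.card R₀ := by rw [← mul_assoc, ← hm, hcardS]
      have h8 := Nat.eq_of_mul_eq_mul_left hHpos h7
      obtain ⟨r, hr⟩ := IsPGroup.iff_card.mp hR₀.2.1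
      have hmdvd : m ∣ q ^ r := ⟨_, by rw [← hr, ← h8]⟩
      have hmN : m ∣ N := by
        have h12 := Subgroup.card_dvd_of_le (sup_le hSQN.1 hR₀.1)
        rw [hm, hN] at h12
        exact (mul_dvd_mul_iff_left (a := Nat.card H) hHpos.ne').mp h12
      obtain ⟨i, hi, rfl⟩ := (Nat.dvd_prime_pow hq).mp hmdvd
      have hi0 : i = 0 := by
        by_contra hi0
        have hqd : q ∣ p ^ s := dvd_trans (dvd_pow_self q hi0) (hmN.trans hNdvd)
        exact hqp ((Nat.prime_dvd_prime_iff_eq hq hp).mp (hq.dvd_of_dvd_pow hqd))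
      subst hi0
      have hcardeq : Nat.card (H ⊔ R₀ : Subgroup G) ≤ Nat.card H := by
        rw [hm]; simp
      have h13 := Subgroup.eq_of_le_of_card_ge le_sup_left hcardeq
      rw [h13]
      exact le_sup_right
    -- now the counting argument inside U
    have hDU : H ⊓ U ≤ U := inf_le_right
    have hUpos : 0 < Nat.card U := Nat.card_pos
    have hDpos : Nat.card (H ⊓ U : Subgroup G) ≠ 0 := Nat.card_pos.ne'
    obtain ⟨n', hn'⟩ : Nat.card (H ⊓ U : Subgroup G) ∣ Nat.card U :=
      Subgroup.card_dvd_of_le hDU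
    have hn'0 : n' ≠ 0 := by
      intro h
      rw [h, mul_zero] at hn'
      exact hUpos.ne' hn'
    have hn'p : ∀ d : ℕ, d.Prime → d ∣ n' → d = p := by
      intro q hq hdvd
      by_contra hqp
      haveI : Fact q.Prime := ⟨hq⟩
      obtain ⟨R', hR', -⟩ := exists_isSyl_le (bot_le : ⊥ ≤ U) IsPGroup.of_bot
      obtain ⟨R₀, hR₀, hle₀⟩ := exists_isSyl_le (hR'.1.trans hUK) hR'.2.1
      have hR'D : R' ≤ H ⊓ U := le_inf (hle₀.trans (hSylH q hq hqp R₀ hR₀)) hR'.1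
      have hdvdD : q ^ (Nat.card U).factorization q ∣ Nat.card (H ⊓ U : Subgroup G) := by
        rw [← hR'.card_eq]; exact Subgroup.card_dvd_of_le hR'D
      have h9 : (Nat.card U).factorization q ≤
          (Nat.card (H ⊓ U : Subgroup G)).factorization q :=
        (hq.pow_dvd_iff_le_factorization hDpos).mp hdvdD
      have h10 : (Nat.card U).factorization q =
          (Nat.card (H ⊓ U : Subgroup G)).factorization q + n'.factorization q := by
        rw [hn', Nat.factorization_mul hDpos hn'0, Finsupp.add_apply]
      have h11 : 0 < n'.factorization q := hq.factorization_pos_of_dvd hn'0 hdvd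
      omega
    have hn'pow := Nat.eq_prime_pow_of_unique_prime_dvd hn'0
      (fun {d} hd hdvd => hn'p d hd hdvd)
    set e := n'.primeFactorsList.length with he
    have hn'fact : n'.factorization p = e := by
      rw [hn'pow, Nat.Prime.factorization_pow hp, Finsupp.single_eq_same]
    have hQcard : Nat.card Q = p ^ (Nat.card U).factorization p := hQ.card_eq
    obtain ⟨b, hb⟩ := IsPGroup.iff_card.mp (IsPGroup.to_inf_right hQ.2.1 (H := H ⊓ U))
    have hbD : p ^ b ∣ Nat.card (H ⊓ U : Subgroup G) := by
      rw [← hb]; exact Subgroup.card_dvd_of_le inf_le_left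
    have hble : b ≤ (Nat.card (H ⊓ U : Subgroup G)).factorization p :=
      (hp.pow_dvd_iff_le_factorization hDpos).mp hbD
    have hfactU : (Nat.card U).factorization p =
        (Nat.card (H ⊓ U : Subgroup G)).factorization p + e := by
      rw [hn', Nat.factorization_mul hDpos hn'0, Finsupp.add_apply, hn'fact]
    have hbe : b + e ≤ (Nat.card U).factorization p := by omega
    obtain ⟨t, ht⟩ : p ^ (b + e) ∣ Nat.card Q := by
      rw [hQcard]; exact pow_dvd_pow p hbe
    have ht0 : t ≠ 0 := by
      intro h
      rw [h, mul_zero] at ht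
      exact (Nat.card_pos (α := Q)).ne' ht
    have hDQcard := card_mul_inf (H ⊓ U) Q
    -- compute the cardinality of the product set
    have hprod : Nat.card (((H ⊓ U : Subgroup G) : Set G) * (Q : Set G) : Set G) =
        Nat.card U * t := by
      have h14 : Nat.card (((H ⊓ U : Subgroup G) : Set G) * (Q : Set G) : Set G) * p ^ b =
          (Nat.card U * t) * p ^ b := by
        calc Nat.card (((H ⊓ U : Subgroup G) : Set G) * (Q : Set G) : Set G) * p ^ b
            = Nat.card (((H ⊓ U : Subgroup G) : Set G) * (Q : Set G) : Set G) *
              Nat.card (H ⊓ U ⊓ Q : Subgroup G) := by rw [hb]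
          _ = Nat.card (H ⊓ U : Subgroup G) * Nat.card Q := hDQcard
          _ = Nat.card (H ⊓ U : Subgroup G) * (p ^ (b + e) * t) := by rw [ht]
          _ = (Nat.card U * t) * p ^ b := by rw [hn', hn'pow, pow_add]; ring
      exact Nat.eq_of_mul_eq_mul_right (pow_pos hp.pos b) h14
    have hsub : ((H ⊓ U : Subgroup G) : Set G) * (Q : Set G) ⊆ (U : Set G) := by
      rintro x ⟨d, hd, q', hq', rfl⟩
      exact U.mul_mem (hDU hd) (hQ.1 hq')
    have hset : ((H ⊓ U : Subgroup G) : Set G) * (Q : Set G) = (U : Set G) := by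
      apply Set.eq_of_subset_of_ncard_le hsub
      rw [← Nat.card_coe_set_eq, ← Nat.card_coe_set_eq, hprod, SetLike.coe_sort_coe]
      exact Nat.le_mul_of_pos_right _ (Nat.pos_of_ne_zero ht0)
    have hset2 : (Q : Set G) * ((H ⊓ U : Subgroup G) : Set G) = (U : Set G) := by
      have h15 : (((H ⊓ U : Subgroup G) : Set G) * (Q : Set G))⁻¹ =
          (Q : Set G) * ((H ⊓ U : Subgroup G) : Set G) := by
        rw [mul_inv_rev, inv_coe_set, inv_coe_set]
      rw [← h15, hset, inv_coe_set]
    rw [hset, hset2]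

end SQNAux

/-- If `H` is S-quasinormal in a finite group `G` and `U ≤ G`, then `H ∩ U` is
S-quasinormal in `U`. -/
theorem sQuasinormal_inf {G : Type*} [Group G] [Finite G] (H U : Subgroup G)
    (hH : SQuasinormal G H) : SQuasinormal U (H.subgroupOf U) := by
  intro p hp P'
  have hSQN : SQNAux.SQN H ⊤ := by
    refine ⟨le_top, fun q hq R hR => ?_⟩
    obtain ⟨R₀, hle⟩ := hR.2.1.exists_le_sylow
    have h0 : (R₀ : Subgroup G) = R := hR.2.2 _ R₀.isPGroup' hle le_top
    rw [← h0]
    exact hH q hq R₀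
  have hmain := SQNAux.main (Nat.card (⊤ : Subgroup G)) ⊤ H U le_rfl hSQN le_top p hp
    ((P' : Subgroup ↥U).map U.subtype) (SQNAux.isSyl_map U P')
  have hinj : Function.Injective (Set.image ((U.subtype : ↥U →* G) : ↥U → G)) :=
    Set.image_injective.mpr (Subgroup.subtype_injective U)
  apply hinj
  rw [Set.image_mul (U.subtype : ↥U →* G), Set.image_mul (U.subtype : ↥U →* G)]
  rw [← Subgroup.coe_map, ← Subgroup.coe_map, Subgroup.subgroupOf_map_subtype]
  exact hmain
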